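/- Let α ∈ (0,1), let k, n be positive integers with n ≥ (1−α)/α, and let L_1, …, L_{n+1} be random functions from {1,…,k+1} to [0,1] whose joint distribution is exchangeable (invariant under every permutation of the indices 1,…,n+1), such that almost surely each L_i is non-increasing on {1,…,k+1} and L_i(k+1) = 0. Define λ̂ = min{ λ ∈ {1,…,k+1} : (1/n) Σ_{i=1}^n L_i(λ) ≤ α − (1−α)/n } (this minimum exists since the empirical average at λ = k+1 equals 0 ≤ α − (1−α)/n). Then E[ L_{n+1}(λ̂) ] ≤ α. -/

import Mathlib

open MeasureTheory ProbabilityTheory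

-- auxiliary lemmas

noncomputable def tlamF (c : ℝ) (n k : ℕ) (f : Fin (n+1) → Fin (k+1) → ℝ) : Fin (k+1) :=
  (insert (Fin.last k) (Finset.univ.filter (fun lam => ∑ i, f i lam ≤ c))).min' ⟨_, Finset.mem_insert_self _ _⟩

lemma tlamF_le {c : ℝ} {n k : ℕ} {f : Fin (n+1) → Fin (k+1) → ℝ} {lam : Fin (k+1)}
    (h : ∑ i, f i lam ≤ c) : tlamF c n k f ≤ lam :=
  Finset.min'_le _ _ (Finset.mem_insert_of_mem (by simpa using h))

lemma tlamF_spec {c : ℝ} {n k : ℕ} {f : Fin (n+1) → Fin (k+1) → ℝ}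
    (h : ∑ i, f i (Fin.last k) ≤ c) : ∑ i, f i (tlamF c n k f) ≤ c := by
  have hmem := Finset.min'_mem (insert (Fin.last k) (Finset.univ.filter (fun lam => ∑ i, f i lam ≤ c))) ⟨_, Finset.mem_insert_self _ _⟩
  rcases Finset.mem_insert.mp hmem with h1 | h2
  · rw [tlamF, h1]; exact h
  · exact (Finset.mem_filter.mp h2).2

lemma tlamF_comp {c : ℝ} {n k : ℕ} (σ : Equiv.Perm (Fin (n+1))) (f : Fin (n+1) → Fin (k+1) → ℝ) :
    tlamF c n k (fun i => f (σ i)) = tlamF c n k f := by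
  unfold tlamF
  congr 2
  ext lam
  simp [Equiv.sum_comp σ (fun i => f i lam)]

lemma measurable_sum_eval {c : ℝ} {n k : ℕ} (lam : Fin (k+1)) :
    Measurable (fun f : Fin (n+1) → Fin (k+1) → ℝ => ∑ i, f i lam) :=
  Finset.measurable_sum _ (fun i _ => (measurable_pi_apply lam).comp (measurable_pi_apply i))

lemma tlamF_eq_iff {c : ℝ} {n k : ℕ} {f : Fin (n+1) → Fin (k+1) → ℝ} {l0 : Fin (k+1)} :
    tlamF c n k f = l0 ↔
      ((l0 = Fin.last k ∨ ∑ i, f i l0 ≤ c) ∧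
        ∀ μ : Fin (k+1), (μ = Fin.last k ∨ ∑ i, f i μ ≤ c) → l0 ≤ μ) := by
  set S := insert (Fin.last k) (Finset.univ.filter (fun lam => ∑ i, f i lam ≤ c)) with hS
  have hne : S.Nonempty := ⟨_, Finset.mem_insert_self _ _⟩
  have hmemiff : ∀ μ : Fin (k+1), μ ∈ S ↔ (μ = Fin.last k ∨ ∑ i, f i μ ≤ c) := by
    intro μ; simp [hS]
  constructor
  · intro h
    have hmem := Finset.min'_mem S hne
    rw [show S.min' hne = tlamF c n k f from rfl, h] at hmem
    refine ⟨(hmemiff l0).mp hmem, fun μ hμ => ?_⟩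
    rw [← h]
    exact Finset.min'_le S μ ((hmemiff μ).mpr hμ)
  · rintro ⟨h1, h2⟩
    refine le_antisymm (Finset.min'_le S l0 ((hmemiff l0).mpr h1)) ?_
    exact h2 _ ((hmemiff _).mp (Finset.min'_mem S hne))

lemma measurable_tlamF {c : ℝ} {n k : ℕ} : Measurable (tlamF c n k) := by
  apply measurable_to_countable'
  intro l0
  have : tlamF c n k ⁻¹' {l0} = ({f | l0 = Fin.last k ∨ ∑ i, f i l0 ≤ c} ∩
      ⋂ μ : Fin (k+1), {f : Fin (n+1) → Fin (k+1) → ℝ | (μ = Fin.last k ∨ ∑ i, f i μ ≤ c) → l0 ≤ μ}) := by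
    ext f
    simp only [Set.mem_preimage, Set.mem_singleton_iff, Set.mem_inter_iff, Set.mem_iInter,
      Set.mem_setOf_eq, tlamF_eq_iff]
  rw [this]
  apply MeasurableSet.inter
  · rcases eq_or_ne l0 (Fin.last k) with h | h
    · simp [h]
    · have : {f : Fin (n+1) → Fin (k+1) → ℝ | l0 = Fin.last k ∨ ∑ i, f i l0 ≤ c}
          = {f | ∑ i, f i l0 ≤ c} := by ext f; simp [h]
      rw [this]
      exact measurableSet_le (measurable_sum_eval (c := c) l0) measurable_const
  · apply MeasurableSet.iInter
    intro μ
    by_cases hle : l0 ≤ μ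
    · simp [hle]
    · rcases eq_or_ne μ (Fin.last k) with h | h
      · exfalso; exact hle (h ▸ Fin.le_last l0)
      · have : {f : Fin (n+1) → Fin (k+1) → ℝ | (μ = Fin.last k ∨ ∑ i, f i μ ≤ c) → l0 ≤ μ}
            = {f | ¬ (∑ i, f i μ ≤ c)} := by
          ext f; simp [h, hle]
        rw [this]
        exact (measurableSet_le (measurable_sum_eval (c := c) μ) measurable_const).compl

lemma measurable_eval_tlamF {c : ℝ} {n k : ℕ} (j : Fin (n+1)) :
    Measurable (fun f : Fin (n+1) → Fin (k+1) → ℝ => f j (tlamF c n k f)) := by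
  have heq : (fun f : Fin (n+1) → Fin (k+1) → ℝ => f j (tlamF c n k f))
      = fun f => ∑ l0 : Fin (k+1), if tlamF c n k f = l0 then f j l0 else 0 := by
    funext f
    rw [Finset.sum_ite_eq]
    simp
  rw [heq]
  apply Finset.measurable_sum
  intro l0 _
  exact Measurable.ite (measurable_tlamF (measurableSet_singleton l0))
    ((measurable_pi_apply l0).comp (measurable_pi_apply j)) measurable_const

/-- discrete Conformal Risk Control. Let `α ∈ (0,1)`, `n ≥ (1−α)/α`,
and let `L 0, …, L n` be exchangeable random loss functions on the parameter grid
`{1, …, k+1}` (modeled as `Fin (k+1)`), valued in `[0,1]`, almost surely non-increasing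
with value `0` at the last grid point. If `λ̂` is the least grid point at which the
empirical average of the first `n` losses is `≤ α − (1−α)/n`, then the expected loss
of the held-out `(n+1)`-st function at `λ̂` is at most `α`. -/
theorem conformal_risk_control_discrete
    {Ω : Type*} [MeasurableSpace Ω] (P : Measure Ω) [IsProbabilityMeasure P]
    (α : ℝ) (hα : α ∈ Set.Ioo (0:ℝ) 1)
    (k n : ℕ) (hk : 0 < k) (hn : 0 < n) (hnα : (1 - α) / α ≤ (n : ℝ))
    (L : Fin (n + 1) → Ω → Fin (k + 1) → ℝ)
    (hLmeas : ∀ i, Measurable (L i))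
    (hrange : ∀ i ω lam, L i ω lam ∈ Set.Icc (0:ℝ) 1)
    (hmono : ∀ i, ∀ᵐ ω ∂P, Antitone (L i ω))
    (hlast : ∀ i, ∀ᵐ ω ∂P, L i ω (Fin.last k) = 0)
    (hexch : ∀ σ : Equiv.Perm (Fin (n + 1)),
      Measure.map (fun ω => fun i => L (σ i) ω) P = Measure.map (fun ω => fun i => L i ω) P)
    (lamhat : Ω → Fin (k + 1)) (hlamhatMeas : Measurable lamhat)
    (hlamhat : ∀ᵐ ω ∂P,
      ((1 / (n : ℝ)) * ∑ i : Fin n, L i.castSucc ω (lamhat ω) ≤ α - (1 - α) / n) ∧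
      ∀ lam : Fin (k + 1),
        ((1 / (n : ℝ)) * ∑ i : Fin n, L i.castSucc ω lam ≤ α - (1 - α) / n) →
          lamhat ω ≤ lam) :
    ∫ ω, L (Fin.last n) ω (lamhat ω) ∂P ≤ α := by
  obtain ⟨hα0, hα1⟩ := hα
  set c : ℝ := ((n : ℝ) + 1) * α with hc
  have hc0 : 0 ≤ c := by positivity
  have hnpos : (0:ℝ) < n := Nat.cast_pos.mpr hn
  -- the oracle threshold
  set T : Ω → Fin (k+1) := fun ω => tlamF c n k (fun i => L i ω) with hT
  have hFmeas : ∀ σ : Equiv.Perm (Fin (n+1)),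
      Measurable (fun ω => fun i : Fin (n+1) => L (σ i) ω) :=
    fun σ => measurable_pi_lambda _ (fun i => hLmeas (σ i))
  have hFidmeas : Measurable (fun ω => fun i : Fin (n+1) => L i ω) :=
    measurable_pi_lambda _ (fun i => hLmeas i)
  -- measurability of ω ↦ L j ω (T ω)
  have hTmeas : ∀ j : Fin (n+1), Measurable (fun ω => L j ω (T ω)) := by
    intro j
    exact (measurable_eval_tlamF (c := c) j).comp hFidmeas
  -- integrability of ω ↦ L j ω (T ω)
  have hTint : ∀ j : Fin (n+1), Integrable (fun ω => L j ω (T ω)) P := by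
    intro j
    refine (integrable_const (1:ℝ)).mono' ((hTmeas j).aestronglyMeasurable) ?_
    filter_upwards with ω
    have h := hrange j ω (T ω)
    rw [Real.norm_eq_abs, abs_le]
    constructor <;> linarith [h.1, h.2]
  -- measurability and integrability of ω ↦ L (last) ω (lamhat ω)
  have hlhmeas : Measurable (fun ω => L (Fin.last n) ω (lamhat ω)) := by
    have heq : (fun ω => L (Fin.last n) ω (lamhat ω))
        = fun ω => ∑ l0 : Fin (k+1), if lamhat ω = l0 then L (Fin.last n) ω l0 else 0 := by
      funext ω; rw [Finset.sum_ite_eq]; simp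
    rw [heq]
    apply Finset.measurable_sum
    intro l0 _
    exact Measurable.ite (hlamhatMeas (measurableSet_singleton l0))
      ((measurable_pi_apply l0).comp (hLmeas (Fin.last n))) measurable_const
  have hlhint : Integrable (fun ω => L (Fin.last n) ω (lamhat ω)) P := by
    refine (integrable_const (1:ℝ)).mono' hlhmeas.aestronglyMeasurable ?_
    filter_upwards with ω
    have h := hrange (Fin.last n) ω (lamhat ω)
    rw [Real.norm_eq_abs, abs_le]
    constructor <;> linarith [h.1, h.2]
  have hlast0 : ∀ᵐ ω ∂P, ∀ i, L i ω (Fin.last k) = 0 := ae_all_iff.mpr hlast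
  -- a.s. : L last (lamhat) ≤ L last (T)
  have hae : ∀ᵐ ω ∂P, L (Fin.last n) ω (lamhat ω) ≤ L (Fin.last n) ω (T ω) := by
    filter_upwards [hlamhat, hmono (Fin.last n)] with ω hlh hm
    obtain ⟨h1, _⟩ := hlh
    have hS : ∑ i : Fin n, L i.castSucc ω (lamhat ω) ≤ (n:ℝ)*α - (1-α) := by
      have h2 : (1/(n:ℝ)) * (∑ i : Fin n, L i.castSucc ω (lamhat ω)) * n
          ≤ (α - (1-α)/n) * n := mul_le_mul_of_nonneg_right h1 hnpos.le
      have e1 : (1/(n:ℝ)) * (∑ i : Fin n, L i.castSucc ω (lamhat ω)) * n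
          = ∑ i : Fin n, L i.castSucc ω (lamhat ω) := by field_simp
      have e2 : (α - (1-α)/(n:ℝ)) * n = (n:ℝ)*α - (1-α) := by field_simp
      linarith
    have hsum : ∑ i : Fin (n+1), L i ω (lamhat ω) ≤ c := by
      rw [Fin.sum_univ_castSucc]
      have hL1 := (hrange (Fin.last n) ω (lamhat ω)).2
      rw [hc]; linarith
    exact hm (tlamF_le hsum)
  -- a.s. : sum of all losses at T is ≤ c
  have haeT : ∀ᵐ ω ∂P, ∑ i : Fin (n+1), L i ω (T ω) ≤ c := by
    filter_upwards [hlast0] with ω hz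
    apply tlamF_spec
    simp [hz, hc0]
  -- exchangeability step
  have key : ∀ j : Fin (n+1),
      ∫ ω, L j ω (T ω) ∂P = ∫ ω, L (Fin.last n) ω (T ω) ∂P := by
    intro j
    set σ : Equiv.Perm (Fin (n+1)) := Equiv.swap (Fin.last n) j with hσ
    set g : (Fin (n+1) → Fin (k+1) → ℝ) → ℝ :=
      fun f => f (Fin.last n) (tlamF c n k f) with hg
    have hgmeas : Measurable g := measurable_eval_tlamF (Fin.last n)
    have h1 : ∫ ω, g (fun i => L (σ i) ω) ∂P
        = ∫ f, g f ∂(Measure.map (fun ω => fun i => L (σ i) ω) P) :=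
      (integral_map (hFmeas σ).aemeasurable hgmeas.aestronglyMeasurable).symm
    have h2 : ∫ ω, g (fun i => L i ω) ∂P
        = ∫ f, g f ∂(Measure.map (fun ω => fun i => L i ω) P) :=
      (integral_map hFidmeas.aemeasurable hgmeas.aestronglyMeasurable).symm
    have h3 : ∫ ω, g (fun i => L (σ i) ω) ∂P = ∫ ω, g (fun i => L i ω) ∂P := by
      rw [h1, h2, hexch σ]
    have h4 : ∀ ω, g (fun i => L (σ i) ω) = L j ω (T ω) := by
      intro ω
      have := tlamF_comp (c := c) σ (fun i => L i ω)
      simp only [hg]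
      rw [this]
      congr 1
      simp [hσ, Equiv.swap_apply_left]
    have h5 : ∀ ω, g (fun i => L i ω) = L (Fin.last n) ω (T ω) := fun ω => rfl
    calc ∫ ω, L j ω (T ω) ∂P = ∫ ω, g (fun i => L (σ i) ω) ∂P := by
          simp_rw [h4]
      _ = ∫ ω, g (fun i => L i ω) ∂P := h3
      _ = ∫ ω, L (Fin.last n) ω (T ω) ∂P := rfl
  -- sum over j
  have hsumint : ((n:ℝ)+1) * ∫ ω, L (Fin.last n) ω (T ω) ∂P ≤ c := by
    have e1 : ∑ j : Fin (n+1), ∫ ω, L j ω (T ω) ∂P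
        = ((n:ℝ)+1) * ∫ ω, L (Fin.last n) ω (T ω) ∂P := by
      rw [Finset.sum_congr rfl (fun j _ => key j)]
      simp [Finset.sum_const, mul_comm]
    have e2 : ∑ j : Fin (n+1), ∫ ω, L j ω (T ω) ∂P
        = ∫ ω, ∑ j : Fin (n+1), L j ω (T ω) ∂P :=
      (integral_finset_sum _ (fun j _ => hTint j)).symm
    have e3 : ∫ ω, ∑ j : Fin (n+1), L j ω (T ω) ∂P ≤ ∫ _ω, c ∂P := by
      refine integral_mono_ae (integrable_finset_sum _ (fun j _ => hTint j))
        (integrable_const c) haeT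
    rw [← e1, e2]
    calc ∫ ω, ∑ j : Fin (n+1), L j ω (T ω) ∂P ≤ ∫ _ω, c ∂P := e3
      _ = c := by simp
  have hfinal : ∫ ω, L (Fin.last n) ω (T ω) ∂P ≤ α := by
    have hpos : (0:ℝ) < (n:ℝ)+1 := by positivity
    rw [hc] at hsumint
    exact le_of_mul_le_mul_left hsumint hpos
  calc ∫ ω, L (Fin.last n) ω (lamhat ω) ∂P
      ≤ ∫ ω, L (Fin.last n) ω (T ω) ∂P := integral_mono_ae hlhint (hTint (Fin.last n)) hae
    _ ≤ α := hfinal
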